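/- Let V = (V_1, …, V_n) be a Cuntz-type tuple in a unital C*-algebra A, and let α(a) = (1/(2^n · n!)) ∑_{f, ς} U_{(f,ς)} a U_{(f,ς)}*, where the sum is over all functions f : {1,…,n} → {0,1} and permutations ς of {1,…,n}, with U_{(f,ς)} = ∑_i (−1)^{f(i)} V_{ς(i)} V_i*. Then for all indices i, j: α(V_i V_j*) = (δ_{ij}/n) · 1. -/

import Mathlib

variable {A : Type*} [NormedRing A] [StarRing A] [CStarRing A] [NormedAlgebra ℂ A]
  [CompleteSpace A] [StarModule ℂ A]

/-- The sign-permutation unitary `U_{(f,ς)} = ∑_i (-1)^{f(i)} V_{ς(i)} V_i*`. -/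
def signPermUnitary {n : ℕ} (V : Fin n → A) (f : Fin n → Fin 2)
    (ς : Equiv.Perm (Fin n)) : A :=
  ∑ i, ((-1 : ℂ) ^ (f i : ℕ)) • (V (ς i) * star (V i))

/-- The averaging operator over all sign-permutation unitaries of a Cuntz-type
tuple `V`. -/
noncomputable def signPermAverage {n : ℕ} (V : Fin n → A) (a : A) : A :=
  ((1 : ℂ) / (2 ^ n * (n.factorial : ℂ))) •
    ∑ f : Fin n → Fin 2, ∑ ς : Equiv.Perm (Fin n),
      signPermUnitary V f ς * a * star (signPermUnitary V f ς)

lemma fin2_add_one_ne (x : Fin 2) : x + 1 ≠ x := by fin_cases x <;> decide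

lemma fin2_add_one_add_one (x : Fin 2) : x + 1 + 1 = x := by fin_cases x <;> decide

lemma fin2_neg_pow (x : Fin 2) : ((-1:ℂ))^((x + 1 : Fin 2) : ℕ) = -((-1:ℂ))^((x : ℕ)) := by
  fin_cases x
  · norm_num
  · norm_num [show ((2:Fin 2):ℕ) = 0 from rfl, show ((1 + 1 : Fin 2) : ℕ) = 0 from rfl]

lemma signPerm_key1 {n : ℕ} (V : Fin n → A)
    (hiso : ∀ i j, star (V i) * V j = if i = j then 1 else 0)
    (f : Fin n → Fin 2) (ς : Equiv.Perm (Fin n)) (i j : Fin n) :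
    signPermUnitary V f ς * (V i * star (V j)) * star (signPermUnitary V f ς)
      = ((-1:ℂ)^((f i : ℕ)+(f j : ℕ))) • (V (ς i) * star (V (ς j))) := by
  unfold signPermUnitary
  rw [star_sum]
  have hstar : ∀ k, star (((-1 : ℂ) ^ (f k : ℕ)) • (V (ς k) * star (V k)))
      = ((-1 : ℂ) ^ (f k : ℕ)) • (V k * star (V (ς k))) := by
    intro k
    rw [star_smul, star_mul, star_star]
    congr 1
    simp
  simp only [hstar]
  rw [Finset.sum_mul, Finset.sum_mul]
  have h1 : ∀ k, ((-1 : ℂ)^(f k : ℕ)) • (V (ς k) * star (V k)) * (V i * star (V j))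
      = if k = i then ((-1:ℂ)^(f i : ℕ)) • (V (ς i) * star (V j)) else 0 := by
    intro k
    rw [smul_mul_assoc]
    have : V (ς k) * star (V k) * (V i * star (V j))
        = V (ς k) * (star (V k) * V i) * star (V j) := by simp [mul_assoc]
    rw [this, hiso k i]
    by_cases h : k = i <;> simp [h]
  simp only [h1, ite_mul, zero_mul, Finset.sum_ite_eq', Finset.mem_univ, if_true]
  rw [Finset.mul_sum]
  have h2 : ∀ l, ((-1:ℂ)^(f i : ℕ)) • (V (ς i) * star (V j)) *
      (((-1 : ℂ) ^ (f l : ℕ)) • (V l * star (V (ς l))))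
      = if l = j then ((-1:ℂ)^((f i : ℕ)+(f j : ℕ))) • (V (ς i) * star (V (ς j))) else 0 := by
    intro l
    rw [smul_mul_assoc, mul_smul_comm, smul_smul, ← pow_add]
    have : V (ς i) * star (V j) * (V l * star (V (ς l)))
        = V (ς i) * (star (V j) * V l) * star (V (ς l)) := by simp [mul_assoc]
    rw [this, hiso j l]
    by_cases h : l = j
    · simp [h, add_comm]
    · simp [h, if_neg (Ne.symm h)]
  simp only [h2, Finset.sum_ite_eq', Finset.mem_univ, if_true]

lemma signPerm_sumf {n : ℕ} (i j : Fin n) :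
    ∑ f : Fin n → Fin 2, ((-1:ℂ)^((f i : ℕ)+(f j : ℕ)))
      = if i = j then (2:ℂ)^n else 0 := by
  by_cases h : i = j
  · subst h
    have h1 : ∀ f : Fin n → Fin 2, ((-1:ℂ)^((f i : ℕ)+(f i : ℕ))) = 1 := by
      intro f; rw [← two_mul, pow_mul]; norm_num
    simp only [h1, Finset.sum_const, Finset.card_univ, nsmul_eq_mul, mul_one, if_pos rfl]
    norm_num [Fintype.card_fun]
  · rw [if_neg h]
    apply Finset.sum_involution (g := fun f _ => Function.update f i (f i + 1))
    · intro f _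
      have hupd : Function.update f i (f i + 1) j = f j := by
        rw [Function.update_of_ne (Ne.symm h)]
      have hii : Function.update f i (f i + 1) i = f i + 1 := by simp
      rw [hupd, hii, pow_add, pow_add, fin2_neg_pow]
      ring
    · intro f _ _ hfe
      have h2 := congrFun hfe i
      simp only [Function.update_self] at h2
      exact fin2_add_one_ne (f i) h2
    · intro f _
      ext k
      by_cases hk : k = i
      · subst hk; simp [fin2_add_one_add_one]
      · simp [Function.update_of_ne hk]
    · intro f _; exact Finset.mem_univ _

lemma signPerm_fibercard {n : ℕ} (i k : Fin n) :
    (Finset.univ.filter (fun ς : Equiv.Perm (Fin n) => ς i = k)).card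
      = (Finset.univ.filter (fun ς : Equiv.Perm (Fin n) => ς i = i)).card := by
  apply Finset.card_bij' (fun ς _ => (Equiv.swap k i) * ς) (fun ς _ => (Equiv.swap k i) * ς)
  · intro ς hς
    simp only [Finset.mem_filter, Finset.mem_univ, true_and] at hς ⊢
    simp [Equiv.Perm.mul_apply, hς]
  · intro ς hς
    simp only [Finset.mem_filter, Finset.mem_univ, true_and] at hς ⊢
    simp [Equiv.Perm.mul_apply, hς, Equiv.swap_apply_right]
  · intro ς _; simp [← mul_assoc]
  · intro ς _; simp [← mul_assoc]

/-- For a Cuntz-type tuple, `α(V_i V_j*) = (δ_{ij} / n) · 1`. -/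
theorem signPermAverage_apply_Vi_Vj_star {n : ℕ} (hn : 0 < n) (V : Fin n → A)
    (hiso : ∀ i j, star (V i) * V j = if i = j then 1 else 0)
    (hsum : ∑ i, V i * star (V i) = 1) (i j : Fin n) :
    signPermAverage V (V i * star (V j)) =
      (if i = j then ((1 : ℂ) / n) else 0) • (1 : A) := by
  unfold signPermAverage
  simp only [signPerm_key1 V hiso]
  rw [Finset.sum_comm]
  simp only [← Finset.sum_smul, signPerm_sumf]
  by_cases h : i = j
  · subst h
    rw [if_pos rfl, if_pos rfl]
    -- count the fibers
    set c := (Finset.univ.filter (fun ς : Equiv.Perm (Fin n) => ς i = i)).card with hc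
    have hfib : ∑ ς : Equiv.Perm (Fin n), V (ς i) * star (V (ς i)) = c • (1 : A) := by
      rw [← Finset.sum_fiberwise Finset.univ (fun ς : Equiv.Perm (Fin n) => ς i)
        (fun ς : Equiv.Perm (Fin n) => V (ς i) * star (V (ς i)))]
      have hinner : ∀ k : Fin n,
          ∑ ς ∈ Finset.univ.filter (fun ς : Equiv.Perm (Fin n) => ς i = k),
            V (ς i) * star (V (ς i)) = c • (V k * star (V k)) := by
        intro k
        rw [Finset.sum_congr rfl (fun ς hς => by
          rw [(Finset.mem_filter.mp hς).2]), Finset.sum_const, signPerm_fibercard]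
      simp only [hinner]
      rw [← Finset.smul_sum, hsum]
    rw [← Finset.smul_sum, hfib]
    have hcount : n * c = n.factorial := by
      have := Finset.card_eq_sum_card_fiberwise
        (f := fun ς : Equiv.Perm (Fin n) => ς i) (s := (Finset.univ : Finset (Equiv.Perm (Fin n))))
        (t := (Finset.univ : Finset (Fin n))) (fun ς _ => Finset.mem_univ _)
      simp only [signPerm_fibercard, Finset.sum_const, Finset.card_univ, smul_eq_mul,
        Fintype.card_fin, Fintype.card_perm] at this
      rw [← hc] at this
      omega
    rw [smul_comm, ← Nat.cast_smul_eq_nsmul ℂ, smul_smul, smul_smul]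
    congr 1
    have hn' : (n : ℂ) ≠ 0 := Nat.cast_ne_zero.mpr hn.ne'
    have hfac : (n.factorial : ℂ) ≠ 0 := Nat.cast_ne_zero.mpr n.factorial_ne_zero
    have h2n : (2 : ℂ)^n ≠ 0 := pow_ne_zero _ two_ne_zero
    have hcast : (n : ℂ) * c = (n.factorial : ℂ) := by
      rw [← Nat.cast_mul, hcount]
    field_simp
    rw [← hcast]
    ring
  · rw [if_neg h, if_neg h]
    simp
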